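/- Let n ≥ 3 and let λ ∈ ℝⁿ have all entries positive. Let D(λ) be the symmetric n×n matrix with diagonal entries D_{ii} = Σ_{j ≠ i} 1/(λ_i + λ_j)² and off-diagonal entries D_{ik} = 1/(λ_i + λ_k)² for i ≠ k. Then D(λ) is positive definite. (D(λ) is the negative of the Jacobian matrix of the map α at λ.) -/

import Mathlib

open Matrix Finset

/-- For `n ≥ 3` and `λ ∈ ℝⁿ` with positive entries, the symmetric matrix with diagonal
entries `Σ_{j ≠ i} 1/(λ_i + λ_j)²` and off-diagonal entries `1/(λ_i + λ_k)²` is positive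
definite. It is the negative of the Jacobian of `α` at `λ`. -/
theorem neg_jacobian_alpha_posDef (n : ℕ) (hn : 3 ≤ n) (lam : Fin n → ℝ)
    (hlam : ∀ i, 0 < lam i) :
    (Matrix.of fun i k : Fin n =>
      if i = k then ∑ j ∈ Finset.univ.erase i, 1 / (lam i + lam j) ^ 2
      else 1 / (lam i + lam k) ^ 2).PosDef := by
  have hd : ∀ i j : Fin n, 0 < (lam i + lam j) ^ 2 := fun i j => by
    have := hlam i; have := hlam j; positivity
  rw [posDef_iff_dotProduct_mulVec]
  constructor
  · -- Hermitian
    ext i j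
    simp only [conjTranspose_apply, of_apply, star_trivial]
    by_cases h : i = j
    · subst h; simp
    · rw [if_neg (fun hh => h hh.symm), if_neg h, add_comm]
  · intro x hx
    have hdot : star x ⬝ᵥ (Matrix.of fun i k : Fin n =>
        if i = k then ∑ j ∈ Finset.univ.erase i, 1 / (lam i + lam j) ^ 2
        else 1 / (lam i + lam k) ^ 2) *ᵥ x
        = ∑ i, ∑ j ∈ univ.erase i, x i * (x i + x j) / (lam i + lam j) ^ 2 := by
      simp only [dotProduct, mulVec, star_trivial, Pi.star_apply, of_apply]
      refine Finset.sum_congr rfl fun i _ => ?_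
      rw [← Finset.add_sum_erase _ _ (mem_univ i)]
      rw [if_pos rfl]
      have : ((∑ j ∈ univ.erase i, 1 / (lam i + lam j) ^ 2) * x i
          + ∑ k ∈ univ.erase i, (if i = k then ∑ j ∈ Finset.univ.erase i,
              1 / (lam i + lam j) ^ 2 else 1 / (lam i + lam k) ^ 2) * x k)
          = ∑ j ∈ univ.erase i, (x i + x j) / (lam i + lam j) ^ 2 := by
        rw [Finset.sum_mul, ← Finset.sum_add_distrib]
        refine Finset.sum_congr rfl fun j hj => ?_
        rw [if_neg (fun hh => (Finset.mem_erase.mp hj).1 hh.symm)]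
        ring
      rw [this, Finset.mul_sum]
      refine Finset.sum_congr rfl fun j _ => ?_
      ring
    have hswap : (∑ i, ∑ j ∈ univ.erase i, x i * (x i + x j) / (lam i + lam j) ^ 2)
        = ∑ i, ∑ j ∈ univ.erase i, x j * (x i + x j) / (lam i + lam j) ^ 2 := by
      rw [Finset.sum_comm' (s' := fun j => univ.erase j) (t' := univ)
        (by intro i j; simp [Finset.mem_erase, ne_comm])]
      refine Finset.sum_congr rfl fun i _ => Finset.sum_congr rfl fun j _ => ?_
      rw [add_comm (x j) (x i), add_comm (lam j) (lam i)]
    have hkey : 2 * (∑ i, ∑ j ∈ univ.erase i, x i * (x i + x j) / (lam i + lam j) ^ 2)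
        = ∑ i, ∑ j ∈ univ.erase i, (x i + x j) ^ 2 / (lam i + lam j) ^ 2 := by
      rw [two_mul]
      nth_rewrite 2 [hswap]
      rw [← Finset.sum_add_distrib]
      refine Finset.sum_congr rfl fun i _ => ?_
      rw [← Finset.sum_add_distrib]
      refine Finset.sum_congr rfl fun j _ => ?_
      ring
    -- existence of a pair with nonzero sum
    have hpair : ∃ a b : Fin n, a ≠ b ∧ x a + x b ≠ 0 := by
      obtain ⟨i, hi⟩ := Function.ne_iff.mp hx
      by_cases h : ∃ j, j ≠ i ∧ x i + x j ≠ 0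
      · obtain ⟨j, hj, hji⟩ := h; exact ⟨i, j, Ne.symm hj, hji⟩
      · push_neg at h
        have hcard : 1 < (univ.erase i).card := by
          rw [Finset.card_erase_of_mem (mem_univ i), Finset.card_univ,
            Fintype.card_fin]
          omega
        obtain ⟨j, hj, k, hk, hjk⟩ := Finset.one_lt_card.mp hcard
        have h1 := h j (Finset.mem_erase.mp hj).1
        have h2 := h k (Finset.mem_erase.mp hk).1
        refine ⟨j, k, hjk, fun hsum => hi ?_⟩
        simp only [Pi.zero_apply]
        linarith
    obtain ⟨a, b, hab, hxab⟩ := hpair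
    have hS : 0 < ∑ i, ∑ j ∈ univ.erase i, (x i + x j) ^ 2 / (lam i + lam j) ^ 2 := by
      refine Finset.sum_pos' (fun i _ => Finset.sum_nonneg fun j _ =>
        div_nonneg (sq_nonneg _) (hd i j).le) ⟨a, mem_univ a, ?_⟩
      refine Finset.sum_pos' (fun j _ => div_nonneg (sq_nonneg _) (hd a j).le)
        ⟨b, Finset.mem_erase.mpr ⟨Ne.symm hab, mem_univ b⟩, ?_⟩
      exact div_pos (by positivity) (hd a b)
    rw [hdot]
    linarith
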